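/- Let n = m + p and k ≥ 1, write points of ℝⁿ = ℝᵐ × ℝᵖ as x = (y, z), and fix H > 0; let D = {(y,z) ∈ ℝᵐ × ℝᵖ : ‖y‖ ≤ H}. Let a : D → ℝ and b : D → ℝᵏ be continuous, and let α : [0,∞) → [0,∞) be of class K. Assume: (i) (control Lyapunov condition) for every x = (y,z) ∈ D, if b(x) = 0 then a(x) ≤ -α(‖y‖); (ii) (small control property) for every ε > 0 and every x₀ ∈ D with zero y-component, there exists δ > 0 such that every x = (y,z) ∈ D with ‖x - x₀‖ < δ admits some u ∈ ℝᵏ with ‖u‖ < ε and a(x) + ⟨b(x), u⟩ ≤ -α(‖y‖). Then the feedback law H : D → ℝᵏ defined by H(x) = 0 if b(x) = 0; H(x) = -(b(x)/‖b(x)‖²)·(a(x) + √(a(x)² + ‖b(x)‖⁴)) if b(x) ≠ 0 and 2√(a(x)² + ‖b(x)‖⁴) ≥ α(‖y‖); and H(x) = -(b(x)/(2‖b(x)‖²))·(2a(x) + α(‖y‖)) otherwise, is continuous on D, and H(x) = 0 at every x ∈ D with b(x) = 0; in particular H(0,z) = 0 whenever b(0,z) = 0. -/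

import Mathlib

open scoped Classical

open RealInnerProductSpace

open Filter

private lemma sqrt_sq_add_sq_le (A C : ℝ) (hC : 0 ≤ C) :
    Real.sqrt (A ^ 2 + C ^ 2) ≤ |A| + C := by
  have h := Real.sqrt_le_sqrt (show A ^ 2 + C ^ 2 ≤ (|A| + C) ^ 2 by
    nlinarith [sq_abs A, abs_nonneg A])
  rwa [Real.sqrt_sq (by positivity)] at h

private lemma abs_le_sqrt_sq_add (A C : ℝ) (hC : 0 ≤ C) :
    |A| ≤ Real.sqrt (A ^ 2 + C) := by
  rw [← Real.sqrt_sq_eq_abs]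
  exact Real.sqrt_le_sqrt (by linarith)

private lemma sontag_norm_bound (A B U : ℝ) (hB : 0 < B) (hU : 0 ≤ U) (hA : A ≤ B * U) :
    (A + Real.sqrt (A ^ 2 + B ^ 4)) / B ^ 2 * B ≤ 2 * U + B := by
  have h1 : Real.sqrt (A ^ 2 + B ^ 4) ≤ |A| + B ^ 2 := by
    have h : A ^ 2 + B ^ 4 = A ^ 2 + (B ^ 2) ^ 2 := by ring
    rw [h]; exact sqrt_sq_add_sq_le A (B ^ 2) (by positivity)
  have h2 : A + |A| ≤ 2 * (B * U) := by
    rcases abs_cases A with ⟨h, _⟩ | ⟨h, _⟩ <;> nlinarith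
  rw [div_mul_eq_mul_div, div_le_iff₀ (by positivity : (0:ℝ) < B ^ 2)]
  nlinarith [Real.sqrt_nonneg (A ^ 2 + B ^ 4)]

private lemma other_norm_bound (C B U : ℝ) (hB : 0 < B) (h : C ≤ 2 * (B * U)) :
    C / (2 * B ^ 2) * B ≤ U := by
  rw [div_mul_eq_mul_div, div_le_iff₀ (by positivity : (0:ℝ) < 2 * B ^ 2)]
  nlinarith

private lemma paste_cwa {X : Type*} [TopologicalSpace X] {E : Type*} [PseudoMetricSpace E]
    {f g h : X → E} {s : Set X} {x : X}
    (hf : ContinuousWithinAt f s x) (hg : ContinuousWithinAt g s x) (hfg : f x = g x)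
    (hh : ∀ᶠ y in nhdsWithin x s, h y = f y ∨ h y = g y) (hhx : h x = f x) :
    ContinuousWithinAt h s x := by
  have hf' := tendsto_iff_dist_tendsto_zero.mp hf
  have hg' := tendsto_iff_dist_tendsto_zero.mp hg
  have key : Tendsto (fun y => dist (h y) (f x)) (nhdsWithin x s) (nhds 0) := by
    apply squeeze_zero' (Filter.Eventually.of_forall fun y => dist_nonneg)
      (g := fun y => dist (f y) (f x) + dist (g y) (g x))
    · filter_upwards [hh] with y hy
      rcases hy with hy | hy
      · rw [hy]; have := dist_nonneg (x := g y) (y := g x); linarith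
      · rw [hy, hfg]; have := dist_nonneg (x := f y) (y := g x); linarith
    · simpa using hf'.add hg'
  rw [ContinuousWithinAt, hhx]
  exact tendsto_iff_dist_tendsto_zero.mpr key

theorem sontag_partial_feedback_continuous
    (m p k : ℕ) (hm : 1 ≤ m) (hp : 1 ≤ p) (hk : 1 ≤ k)
    (Hbound : ℝ) (hHbound : 0 < Hbound)
    (D : Set (EuclideanSpace ℝ (Fin m) × EuclideanSpace ℝ (Fin p)))
    (hD : D = {x | ‖x.1‖ ≤ Hbound})
    (a : EuclideanSpace ℝ (Fin m) × EuclideanSpace ℝ (Fin p) → ℝ)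
    (b : EuclideanSpace ℝ (Fin m) × EuclideanSpace ℝ (Fin p) → EuclideanSpace ℝ (Fin k))
    (ha : ContinuousOn a D) (hb : ContinuousOn b D)
    (α : ℝ → ℝ)
    (hαcont : ContinuousOn α (Set.Ici 0))
    (hαmono : StrictMonoOn α (Set.Ici 0))
    (hα0 : α 0 = 0)
    (hαnonneg : ∀ r ∈ Set.Ici (0 : ℝ), 0 ≤ α r)
    -- (i) control Lyapunov condition
    (hclf : ∀ x ∈ D, b x = 0 → a x ≤ -α ‖x.1‖)
    -- (ii) small control property
    (hscp : ∀ ε > (0 : ℝ), ∀ x₀ ∈ D, x₀.1 = 0 →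
      ∃ δ > (0 : ℝ), ∀ x ∈ D, ‖x - x₀‖ < δ →
        ∃ u : EuclideanSpace ℝ (Fin k), ‖u‖ < ε ∧ a x + ⟪b x, u⟫ ≤ -α ‖x.1‖)
    (H : EuclideanSpace ℝ (Fin m) × EuclideanSpace ℝ (Fin p) → EuclideanSpace ℝ (Fin k))
    (hH : ∀ x, H x =
      if b x = 0 then 0
      else if 2 * Real.sqrt ((a x) ^ 2 + ‖b x‖ ^ 4) ≥ α ‖x.1‖ then
        (-(a x + Real.sqrt ((a x) ^ 2 + ‖b x‖ ^ 4)) / ‖b x‖ ^ 2) • b x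
      else (-(2 * a x + α ‖x.1‖) / (2 * ‖b x‖ ^ 2)) • b x) :
    ContinuousOn H D ∧ (∀ x ∈ D, b x = 0 → H x = 0) ∧
      (∀ z : EuclideanSpace ℝ (Fin p),
        ((0 : EuclideanSpace ℝ (Fin m)), z) ∈ D → b (0, z) = 0 → H (0, z) = 0) := by
  have hH0 : ∀ x, b x = 0 → H x = 0 := fun x hbx => by rw [hH x, if_pos hbx]
  refine ⟨?_, fun x _ hbx => hH0 x hbx, fun z _ hbz => hH0 _ hbz⟩
  intro x₀ hx₀
  have ca : ContinuousWithinAt a D x₀ := ha x₀ hx₀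
  have cb : ContinuousWithinAt b D x₀ := hb x₀ hx₀
  have cα : ContinuousWithinAt
      (fun x : EuclideanSpace ℝ (Fin m) × EuclideanSpace ℝ (Fin p) => α ‖x.1‖) D x₀ := by
    have hcomp : ContinuousOn
        (fun x : EuclideanSpace ℝ (Fin m) × EuclideanSpace ℝ (Fin p) => α ‖x.1‖) D :=
      hαcont.comp (continuous_fst.norm).continuousOn
        (fun x _ => Set.mem_Ici.mpr (norm_nonneg _))
    exact hcomp x₀ hx₀
  have hαnn : ∀ x : EuclideanSpace ℝ (Fin m) × EuclideanSpace ℝ (Fin p),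
      (0:ℝ) ≤ α ‖x.1‖ := fun x => hαnonneg _ (Set.mem_Ici.mpr (norm_nonneg _))
  have hs_nonneg : ∀ x, 0 ≤ a x + Real.sqrt ((a x) ^ 2 + ‖b x‖ ^ 4) := by
    intro x
    have h1 := abs_le_sqrt_sq_add (a x) (‖b x‖ ^ 4) (by positivity)
    have h2 := neg_abs_le (a x)
    linarith
  by_cases hbx : b x₀ = 0
  · have hHx₀ : H x₀ = 0 := hH0 _ hbx
    by_cases hy : x₀.1 = 0
    · -- Case C : b x₀ = 0, x₀.1 = 0, use small control property
      rw [Metric.continuousWithinAt_iff]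
      intro ε hε
      obtain ⟨δ₁, hδ₁, hu⟩ := hscp (ε/4) (by positivity) x₀ hx₀ hy
      obtain ⟨δ₂, hδ₂, hb2⟩ := Metric.continuousWithinAt_iff.mp cb (ε/4) (by positivity)
      refine ⟨min δ₁ δ₂, lt_min hδ₁ hδ₂, ?_⟩
      intro x hxD hxd
      obtain ⟨u, hu1, hu2⟩ := hu x hxD
        (by rw [← dist_eq_norm]; exact lt_of_lt_of_le hxd (min_le_left _ _))
      have hbsmall : ‖b x‖ < ε/4 := by
        have := hb2 hxD (lt_of_lt_of_le hxd (min_le_right _ _))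
        rwa [hbx, dist_zero_right] at this
      rw [hHx₀, dist_zero_right]
      have hinner : |⟪b x, u⟫| ≤ ‖b x‖ * ‖u‖ := abs_real_inner_le_norm _ _
      have hinner1 := (abs_le.mp hinner).1
      have haxu : a x ≤ ‖b x‖ * ‖u‖ := by
        have := hαnn x; linarith
      by_cases hbz : b x = 0
      · rw [hH0 x hbz, norm_zero]; exact hε
      · have hB : 0 < ‖b x‖ := norm_pos_iff.mpr hbz
        rw [hH x, if_neg hbz]
        split_ifs with hcond
        · rw [norm_smul, Real.norm_eq_abs, abs_div, abs_neg,
            abs_of_nonneg (hs_nonneg x), abs_of_pos (by positivity : (0:ℝ) < ‖b x‖ ^ 2)]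
          have hbd := sontag_norm_bound (a x) ‖b x‖ ‖u‖ hB (norm_nonneg u) haxu
          linarith
        · push_neg at hcond
          have habs := abs_le_sqrt_sq_add (a x) (‖b x‖ ^ 4) (by positivity)
          have hna := neg_le_abs (a x)
          have hpos : 0 ≤ 2 * a x + α ‖x.1‖ := by linarith
          have hub : 2 * a x + α ‖x.1‖ ≤ 2 * (‖b x‖ * ‖u‖) := by linarith
          rw [norm_smul, Real.norm_eq_abs, abs_div, abs_neg, abs_of_nonneg hpos,
            abs_of_pos (by positivity : (0:ℝ) < 2 * ‖b x‖ ^ 2)]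
          have hbd := other_norm_bound (2 * a x + α ‖x.1‖) ‖b x‖ ‖u‖ hB hub
          linarith
    · -- Case B : b x₀ = 0, x₀.1 ≠ 0
      have hc : 0 < α ‖x₀.1‖ := by
        have := hαmono (Set.mem_Ici.mpr (le_refl (0:ℝ))) (Set.mem_Ici.mpr (norm_nonneg x₀.1))
          (norm_pos_iff.mpr hy)
        rwa [hα0] at this
      set c := α ‖x₀.1‖ with hcdef
      have ha0 : a x₀ ≤ -c := hclf x₀ hx₀ hbx
      rw [ContinuousWithinAt, hHx₀]
      have e1 : ∀ᶠ x in nhdsWithin x₀ D, a x < a x₀ + c/4 :=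
        Filter.Tendsto.eventually_lt_const (by linarith) ca
      have e2 : ∀ᶠ x in nhdsWithin x₀ D, α ‖x.1‖ < c + c/4 :=
        Filter.Tendsto.eventually_lt_const (by linarith) cα
      apply squeeze_zero_norm' (a := fun x => ‖b x‖)
      · filter_upwards [e1, e2] with x h1 h2
        by_cases hbz : b x = 0
        · rw [hH0 x hbz, norm_zero]; exact norm_nonneg _
        · have hB : 0 < ‖b x‖ := norm_pos_iff.mpr hbz
          have hax : a x < -(3*c/4) := by linarith
          have habs := abs_le_sqrt_sq_add (a x) (‖b x‖ ^ 4) (by positivity)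
          have hna := neg_le_abs (a x)
          have hcond : 2 * Real.sqrt ((a x) ^ 2 + ‖b x‖ ^ 4) ≥ α ‖x.1‖ := by linarith
          rw [hH x, if_neg hbz, if_pos hcond, norm_smul, Real.norm_eq_abs, abs_div, abs_neg,
            abs_of_nonneg (hs_nonneg x), abs_of_pos (by positivity : (0:ℝ) < ‖b x‖ ^ 2)]
          have hbd := sontag_norm_bound (a x) ‖b x‖ 0 hB le_rfl
            (by rw [mul_zero]; linarith)
          linarith
      · have := cb.norm
        rw [ContinuousWithinAt, hbx, norm_zero] at this
        exact this
  · -- Case A : b x₀ ≠ 0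
    have hB₀ : 0 < ‖b x₀‖ := norm_pos_iff.mpr hbx
    have csq : ContinuousWithinAt
        (fun x => Real.sqrt ((a x) ^ 2 + ‖b x‖ ^ 4)) D x₀ :=
      Real.continuous_sqrt.continuousAt.comp_continuousWithinAt ((ca.pow 2).add (cb.norm.pow 4))
    set f₁ : EuclideanSpace ℝ (Fin m) × EuclideanSpace ℝ (Fin p) → EuclideanSpace ℝ (Fin k) :=
      fun x => (-(a x + Real.sqrt ((a x) ^ 2 + ‖b x‖ ^ 4)) / ‖b x‖ ^ 2) • b x with hf₁
    set f₂ : EuclideanSpace ℝ (Fin m) × EuclideanSpace ℝ (Fin p) → EuclideanSpace ℝ (Fin k) :=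
      fun x => (-(2 * a x + α ‖x.1‖) / (2 * ‖b x‖ ^ 2)) • b x with hf₂
    have cf₁ : ContinuousWithinAt f₁ D x₀ :=
      (((ca.add csq).neg).div (cb.norm.pow 2) (pow_ne_zero 2 hB₀.ne')).smul cb
    have cf₂ : ContinuousWithinAt f₂ D x₀ :=
      ((((continuousWithinAt_const.mul ca)).add cα).neg.div
        (continuousWithinAt_const.mul (cb.norm.pow 2)) (mul_ne_zero two_ne_zero (pow_ne_zero 2 hB₀.ne'))).smul cb
    have hbne : ∀ᶠ y in nhdsWithin x₀ D, b y ≠ 0 := cb.eventually_ne hbx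
    have cdiff : ContinuousWithinAt
        (fun y => 2 * Real.sqrt ((a y) ^ 2 + ‖b y‖ ^ 4) - α ‖y.1‖) D x₀ :=
      (continuousWithinAt_const.mul csq).sub cα
    rcases lt_trichotomy (α ‖x₀.1‖) (2 * Real.sqrt ((a x₀) ^ 2 + ‖b x₀‖ ^ 4)) with hlt | heq | hgt
    · have hev : ∀ᶠ y in nhdsWithin x₀ D,
          α ‖y.1‖ < 2 * Real.sqrt ((a y) ^ 2 + ‖b y‖ ^ 4) := by
        have := Filter.Tendsto.eventually_const_lt (by linarith :
          (0:ℝ) < 2 * Real.sqrt ((a x₀) ^ 2 + ‖b x₀‖ ^ 4) - α ‖x₀.1‖) cdiff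
        filter_upwards [this] with y hy
        linarith
      apply cf₁.congr_of_eventuallyEq
      · filter_upwards [hbne, hev] with y h1 h2
        rw [hH y, if_neg h1, if_pos (le_of_lt h2)]
      · rw [hH x₀, if_neg hbx, if_pos (le_of_lt hlt)]
    · have hfg : f₁ x₀ = f₂ x₀ := by
        have hBne : (‖b x₀‖ : ℝ) ^ 2 ≠ 0 := by positivity
        show (-(a x₀ + Real.sqrt ((a x₀) ^ 2 + ‖b x₀‖ ^ 4)) / ‖b x₀‖ ^ 2) • b x₀ =
          (-(2 * a x₀ + α ‖x₀.1‖) / (2 * ‖b x₀‖ ^ 2)) • b x₀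
        congr 1
        rw [heq]
        field_simp
      apply paste_cwa cf₁ cf₂ hfg
      · filter_upwards [hbne] with y h1
        rw [hH y, if_neg h1]
        split_ifs with h
        · exact Or.inl rfl
        · exact Or.inr rfl
      · rw [hH x₀, if_neg hbx, if_pos (le_of_eq heq)]
    · have hev : ∀ᶠ y in nhdsWithin x₀ D,
          2 * Real.sqrt ((a y) ^ 2 + ‖b y‖ ^ 4) < α ‖y.1‖ := by
        have := Filter.Tendsto.eventually_lt_const (by linarith :
          2 * Real.sqrt ((a x₀) ^ 2 + ‖b x₀‖ ^ 4) - α ‖x₀.1‖ < 0) cdiff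
        filter_upwards [this] with y hy
        linarith
      apply cf₂.congr_of_eventuallyEq
      · filter_upwards [hbne, hev] with y h1 h2
        rw [hH y, if_neg h1, if_neg (not_le.mpr h2)]
      · rw [hH x₀, if_neg hbx, if_neg (not_le.mpr hgt)]
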